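/- Let G be a rigid group with principal series G = G_1 > G_2 > ... > G_n > G_{n+1} = 1. Then for every i = 1, ..., n: (1) if g_1, ..., g_n are elements of G with g_m in G_m \ G_{m+1} for every m = 1, ..., n, then G_i = {x in G : [x, g_i, g_{i+1}, ..., g_n] = 1}; (2) G_i = {x in G : [x, G^{(i−1)}, G^{(i)}, ..., G^{(n−1)}] = 1}. -/

import Mathlib

open scoped commutatorElement


/-!
STATEMENT 12 (Lemma, definability of the principal series): Let `G` be rigid with
principal series `G = G_1 > ... > G_{n+1} = 1`. For every `i = 1, ..., n`:
(1) if `g_m ∈ G_m \ G_{m+1}` for `m = 1, ..., n`, then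
`G_i = {x : [x, g_i, g_{i+1}, ..., g_n] = 1}` (left-normed iterated commutators);
(2) `G_i = {x : [x, G^{(i−1)}, G^{(i)}, ..., G^{(n−1)}] = 1}`.
(Indices are 0-based: `s i = G_{i+1}`, `derivedSeries G i = G^{(i)}`.)
-/


/-- A principal series of length `n`: `s 0 = G ≥ ... ≥ s n = 1`, each term normal in `G`,
strictly decreasing, with abelian factors `s i / s (i+1)` that are torsion-free as right
`ℤ[G / s i]`-modules (the module structure given by conjugation); the torsion-freeness is
expressed elementwise: a nonzero element of the group ring (given by representatives
`h j` of pairwise distinct cosets modulo `s i` and integer coefficients `m j`, not all zero)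
applied to `c ∈ s i` lies in `s (i+1)` only if `c` does. -/
def IsPrincipalSeries {G : Type*} [Group G] {n : ℕ} (s : Fin (n + 1) → Subgroup G) : Prop :=
  s 0 = ⊤ ∧ s (Fin.last n) = ⊥ ∧
  (∀ i, (s i).Normal) ∧
  (∀ i : Fin n, s i.succ < s i.castSucc) ∧
  (∀ i : Fin n, ∀ x ∈ s i.castSucc, ∀ y ∈ s i.castSucc, ⁅x, y⁆ ∈ s i.succ) ∧
  (∀ i : Fin n, ∀ c ∈ s i.castSucc, ∀ (k : ℕ) (h : Fin k → G) (m : Fin k → ℤ),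
    (∀ j l : Fin k, j ≠ l → (h j)⁻¹ * h l ∉ s i.castSucc) →
    (∃ j, m j ≠ 0) →
    (List.ofFn fun j => ((h j)⁻¹ * c * h j) ^ m j).prod ∈ s i.succ →
    c ∈ s i.succ)

/-- A group is `n`-rigid if it has a principal series of length `n`. -/
def IsRigid (G : Type*) [Group G] (n : ℕ) : Prop :=
  ∃ s : Fin (n + 1) → Subgroup G, IsPrincipalSeries s

/-- The family `t` of elements of `Gi` is linearly independent (in the factor `Gi/Gi1`)
over the group ring `ℤ[G/Gi]`, expressed elementwise. -/
def LinIndepMod {G : Type*} [Group G] (Gi Gi1 : Subgroup G) {k : ℕ} (t : Fin k → G) : Prop :=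
  (∀ j, t j ∈ Gi) ∧
  ∀ (l : ℕ) (h : Fin k → Fin l → G) (m : Fin k → Fin l → ℤ),
    (∀ j, ∀ p q : Fin l, p ≠ q → (h j p)⁻¹ * h j q ∉ Gi) →
    (List.ofFn fun j : Fin k =>
      (List.ofFn fun p : Fin l => ((h j p)⁻¹ * t j * h j p) ^ m j p).prod).prod ∈ Gi1 →
    ∀ j p, m j p = 0

/-- The rank of the factor `Gi/Gi1` as a `ℤ[G/Gi]`-module: the supremum of cardinalities
of linearly independent families. -/
noncomputable def rankAt {G : Type*} [Group G] (Gi Gi1 : Subgroup G) : ℕ∞ :=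
  ⨆ (k : ℕ) (_ : ∃ t : Fin k → G, LinIndepMod Gi Gi1 t), (k : ℕ∞)

/-- `r_i(G)` computed from a principal series `s`. -/
noncomputable def seriesRank {G : Type*} [Group G] {n : ℕ} (s : Fin (n + 1) → Subgroup G)
    (i : Fin n) : ℕ∞ :=
  rankAt (s i.castSucc) (s i.succ)


/-- Left-normed iterated commutator `[x, a_1, ..., a_k]`. -/
def iterComm {G : Type*} [Group G] : G → List G → G
  | x, [] => x
  | x, a :: l => iterComm ⁅x, a⁆ l

section aux
variable {G : Type} [Group G]

lemma aux_fwd (t : ℕ → Subgroup G)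
    (hcomm : ∀ k, ∀ x ∈ t k, ∀ y ∈ t k, ⁅x, y⁆ ∈ t (k + 1)) :
    ∀ (L : List G) (k : ℕ) (x : G), x ∈ t k →
      (∀ (j : ℕ) (hj : j < L.length), L[j]'hj ∈ t (k + j)) →
      iterComm x L ∈ t (k + L.length) := by
  intro L
  induction L with
  | nil => intro k x hx _; simpa [iterComm] using hx
  | cons a l ih =>
    intro k x hx hL
    have ha : a ∈ t k := by exact hL 0 (by simp)
    have hxa : ⁅x, a⁆ ∈ t (k + 1) := hcomm k x hx a ha
    have hrec := ih (k + 1) ⁅x, a⁆ hxa (fun j hj => by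
      have h := hL (j + 1) (by simpa using Nat.succ_lt_succ hj)
      rw [show k + 1 + j = k + (j + 1) by omega]
      simpa using h)
    rw [show k + (a :: l).length = (k + 1) + l.length by simp; omega]
    exact hrec

lemma aux_bwd (t : ℕ → Subgroup G)
    (hK : ∀ k, ∀ c ∈ t k, ∀ g, g ∉ t k → ⁅c, g⁆ ∈ t (k + 1) → c ∈ t (k + 1)) :
    ∀ (L : List G) (k : ℕ) (x : G), x ∉ t k →
      (∀ (j : ℕ) (hj : j < L.length), L[j]'hj ∈ t (k + j) ∧ L[j]'hj ∉ t (k + j + 1)) →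
      iterComm x L ∉ t (k + L.length) := by
  intro L
  induction L with
  | nil => intro k x hx _; simpa [iterComm] using hx
  | cons a l ih =>
    intro k x hx hL
    have ha : a ∈ t k ∧ a ∉ t (k + 1) := by exact hL 0 (by simp)
    have hax : ⁅a, x⁆ ∉ t (k + 1) := fun h => ha.2 (hK k a ha.1 x hx h)
    have hxa : ⁅x, a⁆ ∉ t (k + 1) := fun h => by
      apply hax
      rw [← commutatorElement_inv]
      exact inv_mem h
    have hrec := ih (k + 1) ⁅x, a⁆ hxa (fun j hj => by
      have h := hL (j + 1) (by simpa using Nat.succ_lt_succ hj)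
      rw [show k + 1 + j = k + (j + 1) by omega]
      simpa using h)
    rw [show k + (a :: l).length = (k + 1) + l.length by simp; omega]
    exact hrec

end aux

set_option maxHeartbeats 2000000 in
theorem stmt12 {G : Type} [Group G] (n : ℕ) (s : Fin (n + 1) → Subgroup G)
    (hs : IsPrincipalSeries s) (i : Fin n) :
    (∀ g : Fin n → G, (∀ m : Fin n, g m ∈ s m.castSucc ∧ g m ∉ s m.succ) →
      ∀ x : G, x ∈ s i.castSucc ↔
        iterComm x (((List.finRange n).drop i.val).map g) = 1) ∧
    (∀ x : G, x ∈ s i.castSucc ↔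
      ∀ y : Fin (n - i.val) → G, (∀ j, y j ∈ derivedSeries G (i.val + j.val)) →
        iterComm x (List.ofFn y) = 1) := by
  obtain ⟨h0, hlast, hnorm, hstrict, hab, htor⟩ := hs
  set t : ℕ → Subgroup G := fun k => if h : k < n + 1 then s ⟨k, h⟩ else ⊥ with ht_def
  have ht : ∀ (k : ℕ) (h : k < n + 1), t k = s ⟨k, h⟩ := fun k h => dif_pos h
  have htb : ∀ (k : ℕ), ¬ (k < n + 1) → t k = ⊥ := fun k h => dif_neg h
  have hcs : ∀ m : Fin n, s m.castSucc = t m.val := by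
    intro m
    rw [ht m.val (by omega)]
    congr 1
  have hsu : ∀ m : Fin n, s m.succ = t (m.val + 1) := by
    intro m
    rw [ht (m.val + 1) (by omega)]
    congr 1
  have ht0 : t 0 = ⊤ := by rw [ht 0 (by omega)]; exact h0
  have htn : ∀ k, n ≤ k → t k = ⊥ := by
    intro k hk
    rcases eq_or_lt_of_le hk with h | h
    · rw [ht k (by omega), ← hlast]
      congr 1
      exact Fin.ext (by simp [Fin.last, h])
    · exact htb k (by omega)
  have hnorm' : ∀ k, (t k).Normal := by
    intro k
    by_cases h : k < n + 1
    · rw [ht k h]; exact hnorm _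
    · rw [htb k h]; infer_instance
  have hcomm : ∀ k, ∀ x ∈ t k, ∀ y ∈ t k, ⁅x, y⁆ ∈ t (k + 1) := by
    intro k x hx y hy
    by_cases hk : k < n
    · have hx' : x ∈ s (⟨k, hk⟩ : Fin n).castSucc := by rw [hcs ⟨k, hk⟩]; exact hx
      have hy' : y ∈ s (⟨k, hk⟩ : Fin n).castSucc := by rw [hcs ⟨k, hk⟩]; exact hy
      have h := hab ⟨k, hk⟩ x hx' y hy'
      rw [hsu ⟨k, hk⟩] at h
      exact h
    · have hx1 : x = 1 := by
        rw [htn k (by omega)] at hx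
        simpa using hx
      have : ⁅x, y⁆ = 1 := by rw [hx1]; simp [commutatorElement_def]
      rw [this]
      exact one_mem _
  have hK : ∀ k, ∀ c ∈ t k, ∀ g, g ∉ t k → ⁅c, g⁆ ∈ t (k + 1) → c ∈ t (k + 1) := by
    intro k c hc g hg hcg
    by_cases hk : k < n
    · have hc' : c ∈ s (⟨k, hk⟩ : Fin n).castSucc := by rw [hcs ⟨k, hk⟩]; exact hc
      have hg' : g ∉ s (⟨k, hk⟩ : Fin n).castSucc := by rw [hcs ⟨k, hk⟩]; exact hg
      have hg2 : g⁻¹ ∉ s (⟨k, hk⟩ : Fin n).castSucc := fun h => hg' (by simpa using inv_mem h)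
      have h := htor ⟨k, hk⟩ c hc' 2 ![1, g⁻¹] ![1, -1] ?_ ?_ ?_
      · rw [hsu ⟨k, hk⟩] at h; exact h
      · intro j l hjl
        match j, l with
        | 0, 0 => exact absurd rfl hjl
        | 0, 1 => simpa using hg2
        | 1, 0 => simpa using hg'
        | 1, 1 => exact absurd rfl hjl
      · exact ⟨1, by norm_num⟩
      · have heq : (List.ofFn fun j : Fin 2 =>
            ((![1, g⁻¹] j)⁻¹ * c * ![1, g⁻¹] j) ^ (![1, -1] j : ℤ)).prod = ⁅c, g⁆ := by
          simp [List.ofFn_succ, commutatorElement_def]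
          group
        rw [heq, hsu ⟨k, hk⟩]
        exact hcg
    · have : c = 1 := by
        rw [htn k (by omega)] at hc
        simpa using hc
      rw [this]
      exact one_mem _
  have hstrict' : ∀ k, ∀ hk : k < n, t (k + 1) < t k := by
    intro k hk
    rw [← hcs ⟨k, hk⟩, ← hsu ⟨k, hk⟩]
    exact hstrict ⟨k, hk⟩
  have hDle : ∀ k, k ≤ n → derivedSeries G k ≤ t k := by
    intro k
    induction k with
    | zero => intro _; rw [ht0]; exact le_top
    | succ k ih =>
      intro hk
      rw [derivedSeries_succ]
      have h1 := ih (by omega)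
      refine Subgroup.commutator_le.mpr ?_
      intro x hx y hy
      exact hcomm k x (h1 hx) y (h1 hy)
  have hEx : ∀ k, k < n → ∃ g, g ∈ derivedSeries G k ∧ g ∉ t (k + 1) := by
    intro k
    induction k with
    | zero =>
      intro hk
      obtain ⟨g, _, hg1⟩ := SetLike.exists_of_lt (hstrict' 0 hk)
      exact ⟨g, Subgroup.mem_top g, hg1⟩
    | succ k ih =>
      intro hk
      by_contra hcon
      push_neg at hcon
      obtain ⟨g, hgD, hgt⟩ := ih (by omega)
      obtain ⟨x, hx1, hx2⟩ := SetLike.exists_of_lt (hstrict' (k + 1) hk)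
      set c := ⁅g, x⁆ with hc_def
      have hcD : c ∈ derivedSeries G k := by
        have h : c = g * (x * g⁻¹ * x⁻¹) := by rw [hc_def, commutatorElement_def]; group
        rw [h]
        exact mul_mem hgD ((derivedSeries_normal G k).conj_mem _ (inv_mem hgD) x)
      have hct : c ∈ t (k + 1) := by
        have h : c = (g * x * g⁻¹) * x⁻¹ := by rw [hc_def, commutatorElement_def]
        rw [h]
        exact mul_mem ((hnorm' (k + 1)).conj_mem x hx1 g) (inv_mem hx1)
      have hcnt : c ∉ t (k + 1 + 1) := by
        intro hmem
        have hxg : ⁅x, g⁆ ∈ t (k + 1 + 1) := by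
          rw [← commutatorElement_inv g x]
          exact inv_mem hmem
        exact hx2 (hK (k + 1) x hx1 g hgt hxg)
      have hcg : ⁅c, g⁆ ∈ derivedSeries G (k + 1) := by
        rw [derivedSeries_succ]
        exact Subgroup.commutator_mem_commutator hcD hgD
      exact hcnt (hK (k + 1) c hct g hgt (hcon _ hcg))
  have hxt : ∀ x : G, x ∈ s i.castSucc ↔ x ∈ t i.val := by
    intro x; rw [hcs i]
  have hile : i.val ≤ n := le_of_lt i.isLt
  have hsum : i.val + (n - i.val) = n := by omega
  constructor
  · -- part (1)
    intro g hg x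
    have hlen : (((List.finRange n).drop i.val).map g).length = n - i.val := by simp
    have hgetL : ∀ (j : ℕ) (hj : j < (((List.finRange n).drop i.val).map g).length)
        (hj' : i.val + j < n),
        (((List.finRange n).drop i.val).map g)[j]'hj = g ⟨i.val + j, hj'⟩ := by
      intro j hj hj'
      simp [List.getElem_map, List.getElem_drop]
    constructor
    · intro hx
      have hmem := aux_fwd t hcomm (((List.finRange n).drop i.val).map g) i.val x
        ((hxt x).mp hx) (by
          intro j hj
          have hj' : i.val + j < n := by rw [hlen] at hj; omega
          rw [hgetL j hj hj', ← hcs ⟨i.val + j, hj'⟩]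
          exact (hg ⟨i.val + j, hj'⟩).1)
      rw [hlen, hsum, htn n le_rfl] at hmem
      simpa using hmem
    · intro hiter
      by_contra hx
      have hne := aux_bwd t hK (((List.finRange n).drop i.val).map g) i.val x
        (fun h => hx ((hxt x).mpr h)) (by
          intro j hj
          have hj' : i.val + j < n := by rw [hlen] at hj; omega
          rw [hgetL j hj hj']
          constructor
          · rw [← hcs ⟨i.val + j, hj'⟩]; exact (hg ⟨i.val + j, hj'⟩).1
          · rw [show i.val + j + 1 = (⟨i.val + j, hj'⟩ : Fin n).val + 1 from rfl,
              ← hsu ⟨i.val + j, hj'⟩]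
            exact (hg ⟨i.val + j, hj'⟩).2)
      rw [hlen, hsum, htn n le_rfl] at hne
      exact hne (by rw [hiter]; exact one_mem _)
  · -- part (2)
    intro x
    constructor
    · intro hx y hy
      have hmem := aux_fwd t hcomm (List.ofFn y) i.val x ((hxt x).mp hx) (by
        intro j hj
        have hj' : j < n - i.val := by simpa using hj
        have he : (List.ofFn y)[j]'hj = y ⟨j, hj'⟩ := by simp
        rw [he]
        exact hDle (i.val + j) (by omega) (hy ⟨j, hj'⟩))
      rw [List.length_ofFn, hsum, htn n le_rfl] at hmem
      simpa using hmem
    · intro hy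
      by_contra hx
      set y : Fin (n - i.val) → G := fun j =>
        (hEx (i.val + j.val) (by have := j.isLt; omega)).choose with hy_def
      have hspec : ∀ j : Fin (n - i.val),
          y j ∈ derivedSeries G (i.val + j.val) ∧ y j ∉ t (i.val + j.val + 1) := fun j =>
        (hEx (i.val + j.val) (by have := j.isLt; omega)).choose_spec
      have hiter := hy y (fun j => (hspec j).1)
      have hne := aux_bwd t hK (List.ofFn y) i.val x (fun h => hx ((hxt x).mpr h)) (by
        intro j hj
        have hj' : j < n - i.val := by simpa using hj
        have he : (List.ofFn y)[j]'hj = y ⟨j, hj'⟩ := by simp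
        rw [he]
        exact ⟨hDle (i.val + j) (by omega) (hspec ⟨j, hj'⟩).1, (hspec ⟨j, hj'⟩).2⟩)
      rw [List.length_ofFn, hsum, htn n le_rfl] at hne
      exact hne (by rw [hiter]; exact one_mem _)
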